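/- The running intersection property holds for the guard tree: the tree of triples defined recursively (root (a₀,b₀,c₀); node (a,b,c) has children (a,j,b) when b>a+1 and (b,j',c) when c>b+1, with a<j<b and b<j'<c) is a join tree of the hypergraph whose hyperedges are its node-triples: for every index i, the set of nodes whose triple contains i forms a connected subtree. -/

import Mathlib

/-- `q` is a legal child of `p` in the guard tree of triples. -/
def IsChild (p q : ℕ × ℕ × ℕ) : Prop :=
  (q.1 = p.1 ∧ q.2.2 = p.2.1 ∧ p.1 < q.2.1 ∧ q.2.1 < p.2.1) ∨
  (q.1 = p.2.1 ∧ q.2.2 = p.2.2 ∧ p.2.1 < q.2.1 ∧ q.2.1 < p.2.2)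

/-- `n` is one of the three indices of the triple `t`. -/
def InTriple (n : ℕ) (t : ℕ × ℕ × ℕ) : Prop :=
  n = t.1 ∨ n = t.2.1 ∨ n = t.2.2

/-- the guard tree (given by a rooted parent structure whose edges
respect the child rule and with at most one child per side) satisfies the running
intersection property: for every index `n`, the set of nodes whose triple contains
`n` is connected in the tree. -/
theorem stmt_12 {ι : Type*} (triple : ι → ℕ × ℕ × ℕ) (r : ι) (parent : ι → ι)
    (hroot : parent r = r)
    (hreach : ∀ i : ι, ∃ n : ℕ, parent^[n] i = r)
    (hinc : ∀ i : ι, (triple i).1 < (triple i).2.1 ∧ (triple i).2.1 < (triple i).2.2)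
    (hchild : ∀ i : ι, i ≠ r → IsChild (triple (parent i)) (triple i))
    (hside : ∀ i j : ι, i ≠ r → j ≠ r → parent i = parent j →
      (triple i).2.2 = (triple j).2.2 → i = j)
    (T : SimpleGraph ι) (hT : T = SimpleGraph.fromRel fun x y => parent x = y) :
    ∀ (n : ℕ) (i j : ι), InTriple n (triple i) → InTriple n (triple j) →
      ∃ p : T.Walk i j, ∀ x ∈ p.support, InTriple n (triple x) := by
  classical
  subst hT
  intro n
  -- depth function
  set d : ι → ℕ := fun i => Nat.find (hreach i) with hd
  have hdspec : ∀ i, parent^[d i] i = r := fun i => Nat.find_spec (hreach i)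
  have hd0 : ∀ i, d i = 0 → i = r := by
    intro i h
    have := hdspec i
    rwa [h, Function.iterate_zero_apply] at this
  have hdparent : ∀ i, i ≠ r → d i = d (parent i) + 1 := by
    intro i hi
    have hpos : 1 ≤ d i := by
      rcases Nat.eq_zero_or_pos (d i) with h | h
      · exact absurd (hd0 i h) hi
      · exact h
    have h1 : d (parent i) ≤ d i - 1 := by
      apply Nat.find_le
      have heq : parent^[d i - 1] (parent i) = parent^[d i - 1 + 1] i := by
        rw [Function.iterate_succ_apply]
      rw [heq, Nat.sub_add_cancel hpos]
      exact hdspec i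
    have h2 : d i ≤ d (parent i) + 1 := by
      apply Nat.find_le
      rw [Function.iterate_succ_apply]
      exact hdspec (parent i)
    omega
  have hdple : ∀ k, d (parent k) ≤ d k := by
    intro k
    by_cases hk : k = r
    · subst hk; rw [hroot]
    · rw [hdparent k hk]; omega
  have hiter_lt : ∀ t j, parent^[t] j ≠ j → d (parent^[t] j) < d j := by
    intro t
    induction t with
    | zero => intro j h; simp at h
    | succ t ih =>
      intro j h
      by_cases hj : parent^[t] j = j
      · rw [Function.iterate_succ_apply', hj] at h ⊢
        have hjr : j ≠ r := by
          intro hr; subst hr; exact h hroot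
        rw [hdparent j hjr]; omega
      · calc d (parent^[t+1] j) = d (parent (parent^[t] j)) := by
              rw [Function.iterate_succ_apply']
        _ ≤ d (parent^[t] j) := hdple _
        _ < d j := ih j hj
  -- interval lemmas
  have hmemI : ∀ k, InTriple n (triple k) → (triple k).1 ≤ n ∧ n ≤ (triple k).2.2 := by
    intro k hk
    have := hinc k
    rcases hk with h | h | h <;> omega
  have hsub : ∀ k, k ≠ r →
      (triple (parent k)).1 ≤ (triple k).1 ∧ (triple k).2.2 ≤ (triple (parent k)).2.2 := by
    intro k hk
    have h1 := hinc k
    have h2 := hinc (parent k)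
    rcases hchild k hk with ⟨ha, hb, hc, hd'⟩ | ⟨ha, hb, hc, hd'⟩ <;> omega
  have hanc : ∀ j, InTriple n (triple j) → ∀ t,
      (triple (parent^[t] j)).1 ≤ n ∧ n ≤ (triple (parent^[t] j)).2.2 := by
    intro j hj t
    induction t with
    | zero => simpa using hmemI j hj
    | succ t ih =>
      rw [Function.iterate_succ_apply']
      by_cases hk : parent^[t] j = r
      · rw [hk, hroot]; rwa [hk] at ih
      · have := hsub _ hk; omega
  -- key lemma
  have key : ∀ i j : ι, i ≠ j → d j ≤ d i → InTriple n (triple i) → InTriple n (triple j) →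
      i ≠ r ∧ InTriple n (triple (parent i)) := by
    intro i j hij hdij hi hj
    have hdr : d r = 0 := Nat.le_zero.mp (Nat.find_le (Function.iterate_zero_apply parent r))
    have hir : i ≠ r := by
      intro hr
      have hi0 : d i = 0 := by rw [hr]; exact hdr
      exact hij (by rw [hr, hd0 j (by omega)])
    refine ⟨hir, ?_⟩
    by_contra hpar
    simp only [InTriple, not_or] at hpar
    -- strict insideness along the ancestors of i
    have hQ : ∀ m, (∀ m' < m, parent^[m'] i ≠ r) →
        (triple (parent^[m] i)).1 < n ∧ n < (triple (parent^[m] i)).2.2 := by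
      intro m
      induction m with
      | zero =>
        intro _
        simp only [Function.iterate_zero_apply]
        have g1 := hinc i
        have g2 := hinc (parent i)
        rcases hchild i hir with ⟨h1, h2, h3, h4⟩ | ⟨h1, h2, h3, h4⟩ <;>
          rcases hi with h | h | h <;> omega
      | succ m ihm =>
        intro hmr
        have hQm := ihm (fun m' h => hmr m' (by omega))
        have hkr : parent^[m] i ≠ r := hmr m (by omega)
        rw [Function.iterate_succ_apply']
        have g1 := hinc (parent^[m] i)
        have g2 := hinc (parent (parent^[m] i))
        rcases hchild _ hkr with ⟨h1, h2, h3, h4⟩ | ⟨h1, h2, h3, h4⟩ <;> omega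
    -- minimal meeting point
    have hex1 : ∃ s, ∃ t, parent^[s] i = parent^[t] j :=
      ⟨d i, d j, by rw [hdspec, hdspec]⟩
    set s := Nat.find hex1 with hs
    have hex2 : ∃ t, parent^[s] i = parent^[t] j := Nat.find_spec hex1
    set t := Nat.find hex2 with ht
    have hmeet : parent^[s] i = parent^[t] j := Nat.find_spec hex2
    have hsmin : ∀ s' < s, ∀ t', parent^[s'] i ≠ parent^[t'] j := by
      intro s' hs' t' h
      exact Nat.find_min hex1 hs' ⟨t', h⟩
    have htmin : ∀ t' < t, parent^[s] i ≠ parent^[t'] j :=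
      fun t' ht' => Nat.find_min hex2 ht'
    have hspos : 1 ≤ s := by
      rcases Nat.eq_zero_or_pos s with h0 | h1
      · exfalso
        have hij' : parent^[t] j ≠ j := by
          rw [← hmeet, h0, Function.iterate_zero_apply]
          exact hij
        have := hiter_lt t j hij'
        rw [← hmeet, h0, Function.iterate_zero_apply] at this
        omega
      · exact h1
    have hnr : ∀ m' < s, parent^[m'] i ≠ r := by
      intro m' h hr
      exact hsmin m' h (d j) (by rw [hr, hdspec])
    have hQs1 := hQ (s - 1) (fun m' h => hnr m' (by omega))
    have hc1r : parent^[s-1] i ≠ r := hnr (s-1) (by omega)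
    have hstep : parent^[s] i = parent (parent^[s-1] i) := by
      conv_lhs => rw [show s = (s-1)+1 from by omega, Function.iterate_succ_apply']
    have hna : ¬ InTriple n (triple (parent^[s] i)) := by
      rw [hstep]
      have g2 := hinc (parent (parent^[s-1] i))
      rcases hchild _ hc1r with ⟨h1, h2, h3, h4⟩ | ⟨h1, h2, h3, h4⟩ <;>
        · simp only [InTriple, not_or]
          omega
    rcases Nat.eq_zero_or_pos t with ht0 | htpos
    · apply hna
      rw [hmeet, ht0, Function.iterate_zero_apply]
      exact hj
    · -- two distinct children of the meet
      have hstep2 : parent^[t] j = parent (parent^[t-1] j) := by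
        conv_lhs => rw [show t = (t-1)+1 from by omega, Function.iterate_succ_apply']
      have hc2r : parent^[t-1] j ≠ r := by
        intro hr
        apply htmin (t-1) (by omega)
        rw [hmeet, hstep2, hr, hroot]
      have hc1c2 : parent^[s-1] i ≠ parent^[t-1] j := hsmin (s-1) (by omega) (t-1)
      have hpc : parent (parent^[s-1] i) = parent (parent^[t-1] j) := by
        rw [← hstep, ← hstep2, hmeet]
      have hc2I := hanc j hj (t-1)
      have hch1 := hchild _ hc1r
      have hch2 := hchild _ hc2r
      rw [hpc] at hch1
      have g2 := hinc (parent (parent^[t-1] j))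
      rcases hch1 with ⟨h1, h2, h3, h4⟩ | ⟨h1, h2, h3, h4⟩ <;>
        rcases hch2 with ⟨g1', g2', g3', g4'⟩ | ⟨g1', g2', g3', g4'⟩
      · exact hc1c2 (hside _ _ hc1r hc2r hpc (by omega))
      · omega
      · omega
      · exact hc1c2 (hside _ _ hc1r hc2r hpc (by omega))
  -- main induction on the sum of depths
  have main : ∀ N (i j : ι), d i + d j ≤ N → InTriple n (triple i) → InTriple n (triple j) →
      ∃ p : (SimpleGraph.fromRel fun x y => parent x = y).Walk i j,
        ∀ x ∈ p.support, InTriple n (triple x) := by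
    intro N
    induction N with
    | zero =>
      intro i j hN hi hj
      have hir : i = r := hd0 i (by omega)
      have hjr : j = r := hd0 j (by omega)
      subst hir
      subst hjr
      exact ⟨SimpleGraph.Walk.nil, by
        intro x hx
        simp only [SimpleGraph.Walk.support_nil, List.mem_singleton] at hx
        subst hx
        exact hi⟩
    | succ N ih =>
      intro i j hN hi hj
      by_cases hij : i = j
      · subst hij
        exact ⟨SimpleGraph.Walk.nil, by
          intro x hx
          simp only [SimpleGraph.Walk.support_nil, List.mem_singleton] at hx
          subst hx
          exact hi⟩
      by_cases hdij : d j ≤ d i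
      · obtain ⟨hir, hpar⟩ := key i j hij hdij hi hj
        have hne : i ≠ parent i := by
          intro h
          have := hdparent i hir
          rw [← h] at this
          omega
        have hadj : (SimpleGraph.fromRel fun x y => parent x = y).Adj i (parent i) := by
          rw [SimpleGraph.fromRel_adj]
          exact ⟨hne, Or.inl rfl⟩
        obtain ⟨p, hp⟩ := ih (parent i) j (by have := hdparent i hir; omega) hpar hj
        refine ⟨SimpleGraph.Walk.cons hadj p, ?_⟩
        intro x hx
        rw [SimpleGraph.Walk.support_cons] at hx
        rcases List.mem_cons.mp hx with rfl | hx
        · exact hi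
        · exact hp x hx
      · obtain ⟨hjr, hpar⟩ := key j i (Ne.symm hij) (by omega) hj hi
        have hne : j ≠ parent j := by
          intro h
          have := hdparent j hjr
          rw [← h] at this
          omega
        have hadj : (SimpleGraph.fromRel fun x y => parent x = y).Adj (parent j) j := by
          rw [SimpleGraph.fromRel_adj]
          exact ⟨Ne.symm hne, Or.inr rfl⟩
        obtain ⟨p, hp⟩ := ih i (parent j) (by have := hdparent j hjr; omega) hi hpar
        refine ⟨p.concat hadj, ?_⟩
        intro x hx
        rw [SimpleGraph.Walk.support_concat, List.mem_append,
          List.mem_singleton] at hx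
        rcases hx with hx | rfl
        · exact hp x hx
        · exact hj
  intro i j hi hj
  exact main (d i + d j) i j le_rfl hi hj
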